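/- Let g be a Lie algebra with subalgebra h and suppose ad(h) acts fully reducibly on an h-invariant complement m (so that m = C_m(h) + [h,m]). Suppose C_m(h) = C(g) + f for subalgebras with C(g) the center of g, and f a compact Lie algebra so that f = [f,f] + C(f). Then g = h + Lev(g) + Nil(g) + C(f), where Lev(g) is a semisimple Levi factor and Nil(g) is the nilradical of g. -/
import Mathlib


/-- key step of Corollary 2.4: If `g = h + m`, `ad(h)` acts fully reducibly on
`m` (so `m = C_m(h) + ⁅h,m⁆`), `C_m(h) = C(g) + f` with `f` a compact subalgebra (so
`f = ⁅f,f⁆ + C(f)`), then `g = h + Lev(g) + Nil(g) + C(f)`, where `Lev(g)` is a semisimple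
Levi factor and `Nil(g)` the nilradical (so `⁅g,g⁆ ⊆ Lev(g) + Nil(g)` and `C(g) ⊆ Nil(g)`). -/
theorem decomposition_h_levi_nilradical_centerf
    {L : Type*} [LieRing L] [LieAlgebra ℝ L] [Module.Finite ℝ L]
    (h m Cmh f Lev Nilg : Submodule ℝ L)
    -- `C_m(h)` is the centralizer of `h` in `m`
    (hCdef : ∀ x : L, x ∈ Cmh ↔ (x ∈ m ∧ ∀ a ∈ h, ⁅x, a⁆ = 0))
    -- `g = h + m`
    (hgm : ∀ x : L, ∃ a ∈ h, ∃ y ∈ m, x = a + y)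
    -- full reducibility: `m = C_m(h) + ⁅h, m⁆`
    (hfullred : ∀ x ∈ m, ∃ c ∈ Cmh,
      ∃ b ∈ Submodule.span ℝ {w : L | ∃ a ∈ h, ∃ y ∈ m, w = ⁅a, y⁆}, x = c + b)
    -- `C_m(h) = C(g) + f`
    (hCmh : ∀ x ∈ Cmh, ∃ c : L, (∀ y : L, ⁅c, y⁆ = 0) ∧ ∃ d ∈ f, x = c + d)
    -- `f` is a subalgebra
    (hfsub : ∀ x ∈ f, ∀ y ∈ f, ⁅x, y⁆ ∈ f)
    -- `f` compact: `f = ⁅f,f⁆ + C(f)`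
    (hfcompact : ∀ x ∈ f, ∃ d ∈ Submodule.span ℝ {w : L | ∃ u ∈ f, ∃ v ∈ f, w = ⁅u, v⁆},
      ∃ c ∈ f, (∀ y ∈ f, ⁅c, y⁆ = 0) ∧ x = d + c)
    -- `⁅g, g⁆ ⊆ Lev(g) + Nil(g)`
    (hderived : ∀ x y : L, ⁅x, y⁆ ∈ Lev ⊔ Nilg)
    -- `C(g) ⊆ Nil(g)`
    (hcenter : ∀ x : L, (∀ y : L, ⁅x, y⁆ = 0) → x ∈ Nilg) :
    ∀ x : L, ∃ a ∈ h, ∃ b ∈ Lev, ∃ c ∈ Nilg, ∃ d ∈ f,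
      (∀ y ∈ f, ⁅d, y⁆ = 0) ∧ x = a + b + c + d := by
  intro x
  obtain ⟨a, ha, y, hy, rfl⟩ := hgm x
  obtain ⟨c, hc, b, hb, rfl⟩ := hfullred y hy
  obtain ⟨z, hz, d, hd, rfl⟩ := hCmh c hc
  obtain ⟨d1, hd1, d2, hd2, hd2c, rfl⟩ := hfcompact d hd
  have hzN : z ∈ Nilg := hcenter z hz
  have hsp1 : b ∈ Lev ⊔ Nilg := by
    refine Submodule.span_le.mpr ?_ hb
    rintro w ⟨u, -, v, -, rfl⟩
    exact hderived u v
  have hsp2 : d1 ∈ Lev ⊔ Nilg := by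
    refine Submodule.span_le.mpr ?_ hd1
    rintro w ⟨u, -, v, -, rfl⟩
    exact hderived u v
  obtain ⟨p, hp, q, hq, hpq⟩ := Submodule.mem_sup.mp (Submodule.add_mem _ hsp1 hsp2)
  refine ⟨a, ha, p, hp, q + z, Submodule.add_mem _ hq hzN, d2, hd2, hd2c, ?_⟩
  have hp' : p = b + d1 - q := by rw [← hpq]; abel
  rw [hp']; abel
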